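/- Let A be a nontrivial 1-generated F-semilattice such that every non-least element of A generates a subalgebra isomorphic to A. If ρ is a congruence of A different from the identity congruence and from the full congruence, then the quotient A/ρ does not belong to the quasivariety generated by A. -/
import Mathlib


inductive SLTerm (F : Type) : Type where
  | var : SLTerm F
  | meet : SLTerm F → SLTerm F → SLTerm F
  | act : F → SLTerm F → SLTerm F

/-- Evaluation of a unary term at an element of an `F`-semilattice. -/
def SLTerm.eval {F A : Type} [SemilatticeInf A] [SMul F A] : SLTerm F → A → A
  | .var, a => a
  | .meet s t, a => s.eval a ⊓ t.eval a
  | .act g t, a => g • t.eval a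

inductive SLTermN (F : Type) : Type where
  | var : ℕ → SLTermN F
  | meet : SLTermN F → SLTermN F → SLTermN F
  | act : F → SLTermN F → SLTermN F

def SLTermN.eval {F A : Type} [SemilatticeInf A] [SMul F A] : SLTermN F → (ℕ → A) → A
  | .var n, v => v n
  | .meet s t, v => s.eval v ⊓ t.eval v
  | .act g t, v => g • t.eval v

def SatQI (F : Type) (A : Type) [SemilatticeInf A] [SMul F A]
    (prem : List (SLTermN F × SLTermN F)) (c : SLTermN F × SLTermN F) : Prop :=
  ∀ v : ℕ → A, (∀ p ∈ prem, p.1.eval v = p.2.eval v) → c.1.eval v = c.2.eval v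

/-- `B` belongs to the quasivariety generated by `A`. -/
def InQ (F : Type) (A B : Type) [SemilatticeInf A] [SMul F A]
    [SemilatticeInf B] [SMul F B] : Prop :=
  ∀ prem c, SatQI F A prem c → SatQI F B prem c

/-- `B` belongs to the variety generated by `A`. -/
def InV (F : Type) (A B : Type) [SemilatticeInf A] [SMul F A]
    [SemilatticeInf B] [SMul F B] : Prop :=
  ∀ s t : SLTermN F, (∀ v : ℕ → A, s.eval v = t.eval v) → ∀ v : ℕ → B, s.eval v = t.eval v

def IsHom (F : Type) {A B : Type} [SemilatticeInf A] [SMul F A] [SemilatticeInf B] [SMul F B]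
    (φ : A → B) : Prop :=
  (∀ x y : A, φ (x ⊓ y) = φ x ⊓ φ y) ∧ ∀ (g : F) (x : A), φ (g • x) = g • φ x

/-- The subuniverse of `A` generated by `a`. -/
def genSet (F : Type) {A : Type} [SemilatticeInf A] [SMul F A] (a : A) : Set A :=
  Set.range fun t : SLTerm F => t.eval a

/-- The quasivariety generated by `A` is a minimal quasivariety of `F`-semilattices. -/
def MinGen (F : Type) [CommGroup F] (A : Type) [SemilatticeInf A] [MulAction F A] : Prop :=
  Nontrivial A ∧
    ∀ (B : Type) [SemilatticeInf B] [MulAction F B],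
      (∀ (g : F) (x y : B), g • (x ⊓ y) = g • x ⊓ g • y) →
      InQ F A B → Nontrivial B → InQ F B A


section Aux

variable {F A : Type} [CommGroup F] [SemilatticeInf A] [MulAction F A]

lemma smul_mono' (hA : ∀ (g : F) (x y : A), g • (x ⊓ y) = g • x ⊓ g • y)
    (g : F) {x y : A} (h : x ≤ y) : g • x ≤ g • y := by
  have h2 := hA g x y
  rw [inf_eq_left.mpr h] at h2
  exact inf_eq_left.mp h2.symm

lemma eval_smul' (hA : ∀ (g : F) (x y : A), g • (x ⊓ y) = g • x ⊓ g • y)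
    (w : SLTerm F) (g : F) (x : A) : w.eval (g • x) = g • w.eval x := by
  induction w with
  | var => rfl
  | meet s t hs ht => simp only [SLTerm.eval, hs, ht, hA]
  | act f t ht =>
      simp only [SLTerm.eval, ht, smul_smul]
      rw [mul_comm]

lemma eval_inf' (hA : ∀ (g : F) (x y : A), g • (x ⊓ y) = g • x ⊓ g • y)
    (w : SLTerm F) (x y : A) : w.eval (x ⊓ y) = w.eval x ⊓ w.eval y := by
  induction w with
  | var => rfl
  | meet s t hs ht =>
      simp only [SLTerm.eval, hs, ht]
      exact inf_inf_inf_comm _ _ _ _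
  | act f t ht => simp only [SLTerm.eval, ht, hA]

lemma good_term (hA : ∀ (g : F) (x y : A), g • (x ⊓ y) = g • x ⊓ g • y)
    {w : SLTerm F} {x : A} (h : w.eval x ≤ x) (r : SLTerm F) :
    w.eval (r.eval x) ≤ r.eval x := by
  induction r with
  | var => exact h
  | meet r1 r2 h1 h2 =>
      show w.eval (r1.eval x ⊓ r2.eval x) ≤ r1.eval x ⊓ r2.eval x
      rw [eval_inf' hA]
      exact inf_le_inf h1 h2
  | act f r h1 =>
      show w.eval (f • r.eval x) ≤ f • r.eval x
      rw [eval_smul' hA]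
      exact smul_mono' hA f h1

def comps {F : Type} [CommGroup F] : SLTerm F → List F
  | .var => [1]
  | .meet s t => comps s ++ comps t
  | .act g t => (comps t).map (g * ·)

lemma comps_le_component {C : Type} [SemilatticeInf C] [MulAction F C]
    (hC : ∀ (g : F) (x y : C), g • (x ⊓ y) = g • x ⊓ g • y)
    (t : SLTerm F) (x : C) : ∀ g ∈ comps t, t.eval x ≤ g • x := by
  induction t with
  | var =>
      intro g hg
      simp only [comps, List.mem_singleton] at hg
      subst hg
      show x ≤ (1 : F) • x
      rw [one_smul]
  | meet t1 t2 h1 h2 =>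
      intro g hg
      rcases List.mem_append.mp hg with h | h
      · exact inf_le_left.trans (h1 g h)
      · exact inf_le_right.trans (h2 g h)
  | act f t h1 =>
      intro g hg
      rcases List.mem_map.mp hg with ⟨h, hh, rfl⟩
      show f • t.eval x ≤ (f * h) • x
      rw [← smul_smul]
      exact smul_mono' hC f (h1 h hh)

lemma le_of_comps {C : Type} [SemilatticeInf C] [MulAction F C]
    (hC : ∀ (g : F) (x y : C), g • (x ⊓ y) = g • x ⊓ g • y)
    (t : SLTerm F) {d x : C} (h : ∀ g ∈ comps t, d ≤ g • x) : d ≤ t.eval x := by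
  induction t generalizing d with
  | var =>
      have := h 1 (by simp [comps])
      rwa [one_smul] at this
  | meet t1 t2 h1 h2 =>
      exact le_inf (h1 fun g hg => h g (List.mem_append.mpr (Or.inl hg)))
        (h2 fun g hg => h g (List.mem_append.mpr (Or.inr hg)))
  | act f t h1 =>
      show d ≤ f • t.eval x
      have h2 : f⁻¹ • d ≤ t.eval x := by
        apply h1
        intro g hg
        have h3 := h (f * g) (List.mem_map.mpr ⟨g, hg, rfl⟩)
        have h4 := smul_mono' hC f⁻¹ h3
        rwa [smul_smul, inv_mul_cancel_left] at h4
      have h5 := smul_mono' hC f h2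
      rwa [smul_inv_smul] at h5

lemma hom_eval {B : Type} [SemilatticeInf B] [MulAction F B] {φ : A → B}
    (h : IsHom F φ) (w : SLTerm F) (x : A) : φ (w.eval x) = w.eval (φ x) := by
  induction w with
  | var => rfl
  | meet s t hs ht => show φ (_ ⊓ _) = _ ⊓ _; rw [h.1, hs, ht]
  | act f t ht => show φ (f • _) = f • _; rw [h.2, ht]

def toN {F : Type} : SLTerm F → SLTermN F
  | .var => .var 0
  | .meet s t => .meet (toN s) (toN t)
  | .act g t => .act g (toN t)

lemma toN_eval {C : Type} [SemilatticeInf C] [SMul F C] (w : SLTerm F) (v : ℕ → C) :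
    (toN w).eval v = w.eval (v 0) := by
  induction w with
  | var => rfl
  | meet s t hs ht => show _ ⊓ _ = _ ⊓ _; rw [hs, ht]
  | act f t ht => show f • _ = f • _; rw [ht]

end Aux

/-- A proper nontrivial quotient of such an `A` does not belong to the quasivariety
generated by `A`.  (The quotient `A/ρ` is represented, via the homomorphism theorem, by an
algebra `B` together with a surjective homomorphism `A → B` whose kernel is `ρ`.) -/
theorem stmt_9 (F : Type) [CommGroup F] (A : Type) [SemilatticeInf A] [MulAction F A]
    (hA : ∀ (g : F) (x y : A), g • (x ⊓ y) = g • x ⊓ g • y)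
    (hnt : Nontrivial A)
    (a : A) (hgen : ∀ x : A, ∃ t : SLTerm F, t.eval a = x)
    (hsub : ∀ b : A, ¬ IsBot b →
      ∃ φ : A → A, Function.Injective φ ∧ Set.range φ = genSet F b ∧ IsHom F φ)
    (ρ : A → A → Prop) (hequiv : Equivalence ρ)
    (hcong_inf : ∀ {x y u v : A}, ρ x y → ρ u v → ρ (x ⊓ u) (y ⊓ v))
    (hcong_smul : ∀ (g : F) {x y : A}, ρ x y → ρ (g • x) (g • y))
    (hne_id : ∃ b c : A, ρ b c ∧ b ≠ c) (hne_full : ∃ b c : A, ¬ ρ b c) :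
    ∀ (B : Type) [SemilatticeInf B] [MulAction F B] (φ : A → B),
      Function.Surjective φ → IsHom F φ → (∀ x y : A, φ x = φ y ↔ ρ x y) →
      ¬ InQ F A B := by
  intro B _ _ φ hsurj hhom hker hInQ
  -- B inherits the compatibility law via the surjection φ
  have hB : ∀ (g : F) (x y : B), g • (x ⊓ y) = g • x ⊓ g • y := by
    intro g x y
    obtain ⟨x', rfl⟩ := hsurj x
    obtain ⟨y', rfl⟩ := hsurj y
    rw [← hhom.1, ← hhom.2, hA, hhom.1, hhom.2, hhom.2]
  -- choose an oriented collapsed pair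
  obtain ⟨b0, c0, hbc0, hne0⟩ := hne_id
  obtain ⟨b, c, hbc, hnle⟩ : ∃ b c : A, ρ b c ∧ ¬ b ≤ c := by
    by_cases hle : b0 ≤ c0
    · exact ⟨c0, b0, hequiv.symm hbc0, fun h => hne0 (le_antisymm hle h)⟩
    · exact ⟨b0, c0, hbc0, hle⟩
  obtain ⟨s, hs⟩ := hgen b
  obtain ⟨t, ht⟩ := hgen c
  have hsta : ¬ s.eval a ≤ t.eval a := by rw [hs, ht]; exact hnle
  obtain ⟨g, hgmem, hgle⟩ : ∃ g ∈ comps t, ¬ s.eval a ≤ g • a := by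
    by_contra h
    push_neg at h
    exact hsta (le_of_comps hA t h)
  set w : SLTerm F := .act g⁻¹ s with hw
  have hwa : ¬ w.eval a ≤ a := by
    intro h
    apply hgle
    have h2 : g • (g⁻¹ • s.eval a) ≤ g • a := smul_mono' hA g h
    rwa [smul_inv_smul] at h2
  -- the quasi-identity: w(x₀) ≤ x₀ → x₀ ≤ x₁
  set prem : List (SLTermN F × SLTermN F) :=
    [(SLTermN.meet (toN w) (.var 0), toN w)] with hprem
  set concl : SLTermN F × SLTermN F :=
    (SLTermN.meet (.var 0) (.var 1), .var 0) with hconcl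
  have hSatA : SatQI F A prem concl := by
    intro v hv
    have hp := hv _ (List.mem_singleton.mpr rfl)
    simp only [SLTermN.eval, toN_eval] at hp
    have hle : w.eval (v 0) ≤ v 0 := inf_eq_left.mp hp
    have hbot : IsBot (v 0) := by
      by_contra hnb
      obtain ⟨ψ, hinj, hrange, hψ⟩ := hsub (v 0) hnb
      have hmem : ψ a ∈ genSet F (v 0) := by
        rw [← hrange]; exact Set.mem_range_self a
      obtain ⟨r, hr⟩ := hmem
      have hr' : r.eval (v 0) = ψ a := hr
      have h1 : w.eval (r.eval (v 0)) ≤ r.eval (v 0) := good_term hA hle r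
      rw [hr', ← hom_eval hψ] at h1
      apply hwa
      have h2 : ψ (w.eval a ⊓ a) = ψ (w.eval a) := by
        rw [hψ.1]; exact inf_eq_left.mpr h1
      exact inf_eq_left.mp (hinj h2)
    show v 0 ⊓ v 1 = v 0
    exact inf_eq_left.mpr (hbot (v 1))
  have hSatB := hInQ prem concl hSatA
  -- in B, the image of the generator satisfies the premise
  have hsab : s.eval (φ a) = t.eval (φ a) := by
    rw [← hom_eval hhom, ← hom_eval hhom, hs, ht]
    exact (hker b c).mpr hbc
  have hwb : w.eval (φ a) ≤ φ a := by
    have h1 : t.eval (φ a) ≤ g • φ a := comps_le_component hB t (φ a) g hgmem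
    have h2 : s.eval (φ a) ≤ g • φ a := by rw [hsab]; exact h1
    have h3 := smul_mono' hB g⁻¹ h2
    rwa [inv_smul_smul] at h3
  -- φ a is not a bottom element of B
  obtain ⟨z, hz⟩ : ∃ z : B, ¬ φ a ≤ z := by
    by_contra h
    push_neg at h
    obtain ⟨b', c', hbc'⟩ := hne_full
    apply hbc'
    rw [← hker]
    have hall : ∀ y : B, y = φ a := by
      intro y
      obtain ⟨x, rfl⟩ := hsurj y
      obtain ⟨u, hu⟩ := hgen x
      rw [← hu, hom_eval hhom]
      clear hu
      induction u with
      | var => rfl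
      | meet u1 u2 h1 h2 =>
          show u1.eval (φ a) ⊓ u2.eval (φ a) = φ a
          rw [h1, h2, inf_idem]
      | act f u h1 =>
          show f • u.eval (φ a) = φ a
          rw [h1]
          refine le_antisymm ?_ (h _)
          have h2 := smul_mono' hB f (h (f⁻¹ • φ a))
          rwa [smul_inv_smul] at h2
    rw [hall (φ b'), hall (φ c')]
  -- evaluate the quasi-identity in B to get a contradiction
  have := hSatB (fun n => if n = 0 then φ a else z) ?_
  · apply hz
    simp only [hconcl, SLTermN.eval, if_pos rfl] at this
    norm_num at this
    exact this
  · intro p hp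
    rw [hprem, List.mem_singleton] at hp
    subst hp
    simp only [SLTermN.eval, toN_eval, if_pos rfl]
    exact inf_eq_left.mpr hwb
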